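/- Let n ≥ 3 and let v_0, v_1, …, v_{l'} be a symmetric filter of length l' (0 < l' ≤ ⌊(n−1)/4⌋), and let w = v ∗ v be its autoconvolution, a symmetric filter of length 2l' ≤ ⌊(n−1)/2⌋. Let W^AR(w) and V^AR := W^AR(v) be the Anti-Reflective matrices built from w and v respectively. Then W^AR(w) = (V^AR)², i.e. the Anti-Reflective matrix of the convolved filter equals the square of the Anti-Reflective matrix of the original filter. -/

import Mathlib

/-- The Anti-Reflective matrix `W^AR ∈ ℝ^{n×n}` (0-based indices; `i.val` plays the
role of the 1-based index `i - 1`) built from a filter `w` of length `l`,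
where `z j = 2 ∑_{k=j}^{l} w k`. -/
def antiReflectiveMatrix (n l : ℕ) (w : ℕ → ℝ) : Matrix (Fin n) (Fin n) ℝ :=
  Matrix.of fun i j : Fin n =>
    if i.val = 0 then (if j.val = 0 then 2 * ∑ k ∈ Finset.Icc 1 l, w k + w 0 else 0)
    else if i.val = n - 1 then (if j.val = n - 1 then 2 * ∑ k ∈ Finset.Icc 1 l, w k + w 0 else 0)
    else if j.val = 0 then 2 * ∑ k ∈ Finset.Icc (i.val + 1) l, w k + w i.val
    else if j.val = n - 1 then 2 * ∑ k ∈ Finset.Icc (n - i.val) l, w k + w (n - 1 - i.val)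
    else w ((i.val : ℤ) - (j.val : ℤ)).natAbs
        - (w (i.val + j.val) + w (2 * n - 2 - i.val - j.val))

namespace Stmt9Aux
open Finset

lemma sum_congr_support (f : ℤ → ℝ) (S T : Finset ℤ)
    (h : ∀ k, f k ≠ 0 → (k ∈ S ↔ k ∈ T)) :
    ∑ k ∈ S, f k = ∑ k ∈ T, f k := by
  have h1 : ∑ k ∈ S ∩ T, f k = ∑ k ∈ S, f k := by
    refine Finset.sum_subset Finset.inter_subset_left ?_
    intro x hxS hx
    by_contra hfx
    exact hx (Finset.mem_inter.2 ⟨hxS, (h x hfx).1 hxS⟩)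
  have h2 : ∑ k ∈ S ∩ T, f k = ∑ k ∈ T, f k := by
    refine Finset.sum_subset Finset.inter_subset_right ?_
    intro x hxT hx
    by_contra hfx
    exact hx (Finset.mem_inter.2 ⟨(h x hfx).2 hxT, hxT⟩)
  rw [← h1, h2]

lemma sum_natInt (f : ℤ → ℝ) (a b : ℕ) (a' b' : ℤ) (ha : a' = (a : ℤ)) (hb : b' = (b : ℤ)) :
    ∑ k ∈ Finset.Icc a b, f (k : ℤ) = ∑ k ∈ Finset.Icc a' b', f k := by
  subst ha hb
  refine Finset.sum_nbij' (fun k => (k : ℤ)) (fun k => k.toNat) ?_ ?_ ?_ ?_ ?_ <;>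
    intro x hx <;> simp [Finset.mem_Icc] at hx ⊢ <;> omega

lemma sum_reflect (f : ℤ → ℝ) (a b c a' b' : ℤ) (ha : a + b' = c) (hb : a' + b = c) :
    ∑ k ∈ Finset.Icc a b, f (c - k) = ∑ k ∈ Finset.Icc a' b', f k := by
  refine Finset.sum_nbij' (fun k => c - k) (fun k => c - k) ?_ ?_ ?_ ?_ ?_ <;>
    intro x hx <;> simp [Finset.mem_Icc] at hx ⊢ <;> omega

lemma sum_shift (f : ℤ → ℝ) (a b c a' b' : ℤ) (ha : a' = a - c) (hb : b' = b - c) :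
    ∑ k ∈ Finset.Icc a b, f (k - c) = ∑ k ∈ Finset.Icc a' b', f k := by
  refine Finset.sum_nbij' (fun k => k - c) (fun k => k + c) ?_ ?_ ?_ ?_ ?_ <;>
    intro x hx <;> simp [Finset.mem_Icc] at hx ⊢ <;> omega

lemma Icc_split (f : ℤ → ℝ) (a b c b1 : ℤ) (h1 : a ≤ b + 1) (h2 : b ≤ c) (hb1 : b1 = b + 1) :
    ∑ k ∈ Finset.Icc a c, f k = ∑ k ∈ Finset.Icc a b, f k + ∑ k ∈ Finset.Icc b1 c, f k := by
  subst hb1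
  have hu : Finset.Icc a b ∪ Finset.Icc (b+1) c = Finset.Icc a c := by
    ext x; simp [Finset.mem_Icc, Finset.mem_union]; omega
  have hd : Disjoint (Finset.Icc a b) (Finset.Icc (b+1) c) := by
    rw [Finset.disjoint_left]; intro x hx hx'
    simp [Finset.mem_Icc] at hx hx'; omega
  rw [← hu, Finset.sum_union hd]

lemma Icc_single (f : ℤ → ℝ) (a b : ℤ) (hab : b = a) :
    ∑ k ∈ Finset.Icc a b, f k = f a := by
  subst hab; rw [Finset.Icc_self, Finset.sum_singleton]



/-- even extension of the filter to `ℤ` -/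
noncomputable def Vb (v : ℕ → ℝ) (t : ℤ) : ℝ := v t.natAbs

/-- tail sum `B m = ∑_{t=m}^{l'} v_t` -/
noncomputable def Bt (l' : ℕ) (v : ℕ → ℝ) (m : ℤ) : ℝ := ∑ t ∈ Finset.Icc m (l' : ℤ), Vb v t

/-- anti-reflectively extended first column -/
noncomputable def gf (l' : ℕ) (v : ℕ → ℝ) (m : ℤ) : ℝ :=
  if 0 < m then Bt l' v m + Bt l' v (m+1) else 2 - (Bt l' v (-m) + Bt l' v (1-m))

section core
variable {l' : ℕ} {v : ℕ → ℝ}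

lemma Vb_eq_zero (hzero : ∀ k, l' < k → v k = 0) {t : ℤ} (h : (l' : ℤ) < t.natAbs) :
    Vb v t = 0 := hzero _ (by exact_mod_cast h)

lemma Vb_ne_zero (hzero : ∀ k, l' < k → v k = 0) {t : ℤ} (h : Vb v t ≠ 0) :
    (t.natAbs : ℤ) ≤ (l' : ℤ) := by
  by_contra hc
  exact h (Vb_eq_zero hzero (by omega))

lemma Vb_congr {s t : ℤ} (h : s.natAbs = t.natAbs) : Vb v s = Vb v t := by
  unfold Vb; rw [h]

lemma Bt_zero {m : ℤ} (h : (l' : ℤ) < m) : Bt l' v m = 0 := by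
  unfold Bt
  rw [Finset.Icc_eq_empty (by omega), Finset.sum_empty]

lemma Bt_split (hzero : ∀ k, l' < k → v k = 0) {m : ℤ} (h : 0 ≤ m) :
    Bt l' v m = Vb v m + Bt l' v (m+1) := by
  rcases le_or_gt m (l' : ℤ) with hm | hm
  · unfold Bt
    rw [Icc_split _ m m (l' : ℤ) (m+1) (by omega) hm rfl, Icc_single _ m m rfl]
  · rw [Bt_zero hm, Bt_zero (by omega), Vb_eq_zero hzero (by omega)]
    ring

lemma Bt_one : Bt l' v 1 = ∑ t ∈ Finset.Icc 1 l', v t := by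
  unfold Bt
  rw [← sum_natInt (Vb v) 1 l' 1 (l' : ℤ) (by norm_num) rfl]
  simp [Vb]

lemma tot (hsum : v 0 + 2 * ∑ j ∈ Finset.Icc 1 l', v j = 1) :
    ∑ t ∈ Finset.Icc (-(l' : ℤ)) (l' : ℤ), Vb v t = 1 := by
  rw [Icc_split (Vb v) _ (-1) _ 0 (by omega) (by omega) (by ring),
      Icc_split (Vb v) 0 0 _ 1 (by omega) (by omega) (by ring),
      Icc_single (Vb v) 0 0 rfl]
  have hneg : ∑ t ∈ Finset.Icc (-(l' : ℤ)) (-1 : ℤ), Vb v t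
      = ∑ t ∈ Finset.Icc (1 : ℤ) (l' : ℤ), Vb v t := by
    rw [← sum_reflect (fun k => Vb v k) 1 (l' : ℤ) 0 (-(l' : ℤ)) (-1) (by ring) (by ring)]
    refine Finset.sum_congr rfl (fun x _ => ?_)
    exact Vb_congr (by omega)
  rw [hneg]
  have h1 : ∑ t ∈ Finset.Icc (1 : ℤ) (l' : ℤ), Vb v t = ∑ t ∈ Finset.Icc 1 l', v t := Bt_one
  rw [h1]
  show ∑ t ∈ Finset.Icc 1 l', v t + (v 0 + ∑ t ∈ Finset.Icc 1 l', v t) = 1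
  linarith [hsum]

lemma gf_zero (hzero : ∀ k, l' < k → v k = 0)
    (hsum : v 0 + 2 * ∑ j ∈ Finset.Icc 1 l', v j = 1) : gf l' v 0 = 1 := by
  unfold gf
  rw [if_neg (by omega)]
  rw [show (-(0:ℤ)) = 0 by ring, show ((1:ℤ)-0) = 1 by ring]
  rw [Bt_split hzero le_rfl, show ((0:ℤ)+1) = 1 by ring, Bt_one]
  show 2 - (v 0 + ∑ t ∈ Finset.Icc 1 l', v t + ∑ t ∈ Finset.Icc 1 l', v t) = 1
  linarith [hsum]

lemma gf_pos {m : ℤ} (h : 0 < m) : gf l' v m = Bt l' v m + Bt l' v (m+1) := if_pos h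

lemma gf_neg (hzero : ∀ k, l' < k → v k = 0)
    (hsum : v 0 + 2 * ∑ j ∈ Finset.Icc 1 l', v j = 1) {m : ℤ} (h : m ≤ 0) :
    gf l' v m = 2 - gf l' v (-m) := by
  rcases eq_or_lt_of_le h with h0 | h0
  · rw [h0]
    rw [gf_zero hzero hsum, show (-(0:ℤ)) = 0 by ring, gf_zero hzero hsum]
    ring
  · unfold gf
    rw [if_neg (by omega), if_pos (by omega)]
    ring_nf

lemma gf_supp {m : ℤ} (h : (l' : ℤ) < m) : gf l' v m = 0 := by
  unfold gf
  rw [if_pos (by omega), Bt_zero h, Bt_zero (by omega)]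
  ring

lemma gf_ne_zero {m : ℤ} (h : gf l' v m ≠ 0) : m ≤ (l' : ℤ) := by
  by_contra hc
  exact h (gf_supp (by omega))

lemma gf_eq (hzero : ∀ k, l' < k → v k = 0) {m : ℤ} (h : 1 ≤ m) :
    gf l' v m = 2 * Bt l' v m - Vb v m := by
  rw [gf_pos (by omega), Bt_split hzero (by omega)]
  ring

end core

section conv
variable {l' : ℕ} {v w : ℕ → ℝ}

lemma KW0 (hzero : ∀ k, l' < k → v k = 0)
    (hw : ∀ j : ℕ, w j = ∑' k : ℤ, v k.natAbs * v ((j : ℤ) - k).natAbs) (t : ℕ) :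
    w t = ∑ k ∈ Finset.Icc (-(l' : ℤ)) (l' : ℤ), Vb v k * Vb v ((t : ℤ) - k) := by
  rw [hw t]
  exact tsum_eq_sum (by
    intro k hk
    simp [Finset.mem_Icc] at hk
    have : l' < k.natAbs := by omega
    rw [hzero _ this, zero_mul])

lemma KW (hzero : ∀ k, l' < k → v k = 0)
    (hw : ∀ j : ℕ, w j = ∑' k : ℤ, v k.natAbs * v ((j : ℤ) - k).natAbs) (t : ℤ) :
    w t.natAbs = ∑ k ∈ Finset.Icc (-(l' : ℤ)) (l' : ℤ), Vb v k * Vb v (t - k) := by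
  rcases le_or_gt 0 t with ht | ht
  · rw [KW0 hzero hw t.natAbs]
    refine Finset.sum_congr rfl (fun k _ => ?_)
    congr 1
    exact Vb_congr (by omega)
  · rw [KW0 hzero hw t.natAbs]
    have h1 : ∀ k : ℤ, Vb v k * Vb v ((t.natAbs : ℤ) - k)
        = (fun s => Vb v s * Vb v (t - s)) (0 - k) := by
      intro k
      show Vb v k * Vb v ((t.natAbs : ℤ) - k) = Vb v (0-k) * Vb v (t - (0-k))
      rw [Vb_congr (show k.natAbs = (0-k).natAbs by omega),
          Vb_congr (show ((t.natAbs : ℤ) - k).natAbs = (t - (0-k)).natAbs by omega)]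
    rw [Finset.sum_congr rfl (fun k _ => h1 k)]
    exact sum_reflect (fun s => Vb v s * Vb v (t - s)) (-(l' : ℤ)) (l' : ℤ) 0 (-(l' : ℤ)) (l' : ℤ) (by ring) (by ring)

lemma MCONV (hzero : ∀ k, l' < k → v k = 0)
    (hw : ∀ j : ℕ, w j = ∑' k : ℤ, v k.natAbs * v ((j : ℤ) - k).natAbs)
    (x y : ℤ) (S : Finset ℤ)
    (hS : ∀ k, ((x - k).natAbs : ℤ) ≤ (l' : ℤ) → ((k - y).natAbs : ℤ) ≤ (l' : ℤ) → k ∈ S) :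
    ∑ k ∈ S, Vb v (x - k) * Vb v (k - y) = w (x - y).natAbs := by
  have h1 := KW hzero hw (x - y)
  have h2 : ∑ s ∈ Finset.Icc (-(l' : ℤ)) (l' : ℤ), Vb v s * Vb v ((x - y) - s)
      = ∑ k ∈ Finset.Icc (x - l') (x + l'), Vb v (x - k) * Vb v (k - y) := by
    rw [← sum_reflect (fun k => Vb v (x - k) * Vb v (k - y)) (-(l' : ℤ)) (l' : ℤ) x
        (x - l') (x + l') (by ring) (by ring)]
    refine Finset.sum_congr rfl (fun s _ => ?_)
    rw [Vb_congr (show (x - (x - s)).natAbs = s.natAbs by omega),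
        Vb_congr (show ((x - s) - y).natAbs = ((x - y) - s).natAbs by omega)]
  rw [h1, h2]
  refine (sum_congr_support (fun k => Vb v (x - k) * Vb v (k - y)) (Finset.Icc (x - l') (x + l')) S ?_).symm
  intro k hk
  have hk1 : Vb v (x - k) ≠ 0 := fun h => hk (by rw [h, zero_mul])
  have hk2 : Vb v (k - y) ≠ 0 := fun h => hk (by rw [h, mul_zero])
  have h3 := Vb_ne_zero hzero hk1
  have h4 := Vb_ne_zero hzero hk2
  constructor
  · intro _; exact hS k h3 h4
  · intro _; simp [Finset.mem_Icc]; omega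

lemma WZ (hzero : ∀ k, l' < k → v k = 0)
    (hw : ∀ j : ℕ, w j = ∑' k : ℤ, v k.natAbs * v ((j : ℤ) - k).natAbs)
    {u : ℤ} (h : 2 * (l' : ℤ) < u.natAbs) : w u.natAbs = 0 := by
  rw [KW hzero hw u]
  refine Finset.sum_eq_zero (fun k hk => ?_)
  simp [Finset.mem_Icc] at hk
  rcases le_or_gt ((u - k).natAbs : ℤ) (l' : ℤ) with h1 | h1
  · rw [Vb_eq_zero hzero (show (l' : ℤ) < k.natAbs by omega), zero_mul]
  · rw [Vb_eq_zero hzero h1, mul_zero]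

end conv

section gg
variable {l' : ℕ} {v w : ℕ → ℝ}

lemma SB (hzero : ∀ k, l' < k → v k = 0) (m c : ℤ) (hm : 1 ≤ m) (hc : (l' : ℤ) ≤ c) :
    ∑ t ∈ Finset.Icc m c, Vb v t = Bt l' v m := by
  unfold Bt
  symm
  refine Finset.sum_subset (Finset.Icc_subset_Icc_right hc) ?_
  intro x hx hx'
  simp [Finset.mem_Icc] at hx hx'
  exact Vb_eq_zero hzero (by omega)

lemma SBneg (hzero : ∀ k, l' < k → v k = 0)
    (hsum : v 0 + 2 * ∑ j ∈ Finset.Icc 1 l', v j = 1)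
    (m c : ℤ) (hm1 : 1 - (l' : ℤ) ≤ m) (hm2 : m ≤ 0) (hc : (l' : ℤ) ≤ c) :
    ∑ t ∈ Finset.Icc m c, Vb v t = 1 - Bt l' v (1 - m) := by
  have step1 : ∑ t ∈ Finset.Icc m c, Vb v t = ∑ t ∈ Finset.Icc m (l' : ℤ), Vb v t := by
    symm
    refine Finset.sum_subset (Finset.Icc_subset_Icc_right hc) ?_
    intro x hx hx'
    simp [Finset.mem_Icc] at hx hx'
    exact Vb_eq_zero hzero (by omega)
  have step2 := tot hsum
  rw [Icc_split (Vb v) (-(l' : ℤ)) (m-1) (l' : ℤ) m (by omega) (by omega) (by ring)] at step2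
  have step3 : ∑ t ∈ Finset.Icc (-(l' : ℤ)) (m-1), Vb v t = Bt l' v (1-m) := by
    unfold Bt
    rw [← sum_reflect (Vb v) (1-m) (l' : ℤ) 0 (-(l' : ℤ)) (m-1) (by ring) (by ring)]
    exact Finset.sum_congr rfl (fun x _ => Vb_congr (by omega))
  rw [step1]
  rw [step3] at step2
  linarith [step2]

lemma GG (hzero : ∀ k, l' < k → v k = 0)
    (hsum : v 0 + 2 * ∑ j ∈ Finset.Icc 1 l', v j = 1)
    (m c : ℤ) (hm : 1 - (l' : ℤ) ≤ m) (hc : (l' : ℤ) ≤ c) :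
    (∑ t ∈ Finset.Icc m c, Vb v t) + ∑ t ∈ Finset.Icc (m+1) c, Vb v t = gf l' v m := by
  rcases lt_or_ge 0 m with h | h
  · rw [SB hzero m c (by omega) hc, SB hzero (m+1) c (by omega) hc, gf_pos h]
  · rcases eq_or_lt_of_le h with h0 | h0
    · subst h0
      rw [SBneg hzero hsum 0 c (by omega) (by omega) hc,
          SB hzero (0+1) c (by omega) hc, gf_zero hzero hsum]
      have : Bt l' v (1 - 0) = Bt l' v (0+1) := by norm_num
      rw [this]; ring
    · rw [SBneg hzero hsum m c hm (by omega) hc,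
          SBneg hzero hsum (m+1) c (by omega) (by omega) hc]
      have h1 : (1 : ℤ) - (m+1) = -m := by ring
      rw [h1]
      unfold gf
      rw [if_neg (by omega)]
      ring

lemma TOTW (hzero : ∀ k, l' < k → v k = 0)
    (hsum : v 0 + 2 * ∑ j ∈ Finset.Icc 1 l', v j = 1)
    (hw : ∀ j : ℕ, w j = ∑' k : ℤ, v k.natAbs * v ((j : ℤ) - k).natAbs) :
    ∑ u ∈ Finset.Icc (-(2 * (l' : ℤ))) (2 * (l' : ℤ)), w u.natAbs = 1 := by
  have h1 : ∑ u ∈ Finset.Icc (-(2 * (l' : ℤ))) (2 * (l' : ℤ)), w u.natAbs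
      = ∑ u ∈ Finset.Icc (-(2 * (l' : ℤ))) (2 * (l' : ℤ)),
          ∑ s ∈ Finset.Icc (-(l' : ℤ)) (l' : ℤ), Vb v s * Vb v (u - s) :=
    Finset.sum_congr rfl (fun u _ => KW hzero hw u)
  rw [h1, Finset.sum_comm]
  have h2 : ∀ s ∈ Finset.Icc (-(l' : ℤ)) (l' : ℤ),
      ∑ u ∈ Finset.Icc (-(2 * (l' : ℤ))) (2 * (l' : ℤ)), Vb v s * Vb v (u - s) = Vb v s := by
    intro s hs
    simp [Finset.mem_Icc] at hs
    rw [← Finset.mul_sum]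
    rw [sum_shift (Vb v) _ _ s (-(2 * (l' : ℤ)) - s) ((2 * (l' : ℤ)) - s) rfl rfl]
    have h4 : ∑ t ∈ Finset.Icc (-(2 * (l' : ℤ)) - s) ((2 * (l' : ℤ)) - s), Vb v t
        = ∑ t ∈ Finset.Icc (-(l' : ℤ)) (l' : ℤ), Vb v t := by
      apply sum_congr_support (Vb v)
      intro k hk
      have := Vb_ne_zero hzero hk
      simp [Finset.mem_Icc]; omega
    rw [h4, tot hsum, mul_one]
  rw [Finset.sum_congr rfl h2, tot hsum]

lemma W1 (hzero : ∀ k, l' < k → v k = 0)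
    (hsum : v 0 + 2 * ∑ j ∈ Finset.Icc 1 l', v j = 1)
    (hw : ∀ j : ℕ, w j = ∑' k : ℤ, v k.natAbs * v ((j : ℤ) - k).natAbs) :
    2 * ∑ k ∈ Finset.Icc 1 (2 * l'), w k + w 0 = 1 := by
  have h0 := TOTW hzero hsum hw
  rw [Icc_split (fun u => w u.natAbs) _ (-1) _ 0 (by omega) (by omega) (by ring),
      Icc_split (fun u => w u.natAbs) 0 0 _ 1 (by omega) (by omega) (by ring),
      Icc_single (fun u => w u.natAbs) 0 0 rfl] at h0
  have hneg : ∑ u ∈ Finset.Icc (-(2 * (l' : ℤ))) (-1 : ℤ), w u.natAbs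
      = ∑ u ∈ Finset.Icc (1 : ℤ) (2 * (l' : ℤ)), w u.natAbs := by
    rw [← sum_reflect (fun u => w u.natAbs) 1 (2 * (l' : ℤ)) 0 (-(2 * (l' : ℤ))) (-1)
        (by ring) (by ring)]
    exact Finset.sum_congr rfl (fun u _ => by congr 1 <;> omega)
  have hcast : ∑ u ∈ Finset.Icc (1 : ℤ) (2 * (l' : ℤ)), w u.natAbs
      = ∑ k ∈ Finset.Icc 1 (2 * l'), w k := by
    rw [← sum_natInt (fun u => w u.natAbs) 1 (2 * l') 1 (2 * (l' : ℤ)) (by norm_num)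
        (by push_cast; ring)]
    exact Finset.sum_congr rfl (fun k _ => by congr 1 <;> omega)
  rw [hneg, hcast] at h0
  simp only [Int.natAbs_zero] at h0
  linarith [h0]

lemma GW (hzero : ∀ k, l' < k → v k = 0)
    (hsum : v 0 + 2 * ∑ j ∈ Finset.Icc 1 l', v j = 1)
    (hw : ∀ j : ℕ, w j = ∑' k : ℤ, v k.natAbs * v ((j : ℤ) - k).natAbs)
    (i : ℤ) (hi : 1 ≤ i) :
    (∑ u ∈ Finset.Icc i (2 * (l' : ℤ)), w u.natAbs)
      + ∑ u ∈ Finset.Icc (i+1) (2 * (l' : ℤ)), w u.natAbs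
      = ∑ s ∈ Finset.Icc (-(l' : ℤ)) (l' : ℤ), Vb v s * gf l' v (i - s) := by
  have key : ∀ a : ℤ, ∑ u ∈ Finset.Icc a (2 * (l' : ℤ)), w u.natAbs
      = ∑ s ∈ Finset.Icc (-(l' : ℤ)) (l' : ℤ),
          Vb v s * ∑ t ∈ Finset.Icc (a - s) (2 * (l' : ℤ) - s), Vb v t := by
    intro a
    rw [Finset.sum_congr rfl (fun u _ => KW hzero hw u), Finset.sum_comm]
    refine Finset.sum_congr rfl (fun s _ => ?_)
    rw [← Finset.mul_sum]
    congr 1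
    exact sum_shift (Vb v) _ _ s _ _ rfl rfl
  rw [key i, key (i+1), ← Finset.sum_add_distrib]
  refine Finset.sum_congr rfl (fun s hs => ?_)
  simp [Finset.mem_Icc] at hs
  rw [← mul_add]
  have hb : (i + 1) - s = (i - s) + 1 := by ring
  rw [hb, GG hzero hsum (i - s) (2 * (l' : ℤ) - s) (by omega) (by omega)]

end gg

section starcore
variable {l' : ℕ} {v w : ℕ → ℝ}

lemma STARcore (hl' : 0 < l') (hzero : ∀ k, l' < k → v k = 0)
    (hsum : v 0 + 2 * ∑ j ∈ Finset.Icc 1 l', v j = 1) (i : ℤ) (hi : 1 ≤ i) :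
    ∑ s ∈ Finset.Icc (-(l' : ℤ)) (l' : ℤ), Vb v s * gf l' v (i - s)
      = gf l' v i
        + ∑ k ∈ Finset.Icc (1 : ℤ) (l' : ℤ), (Vb v (i - k) - Vb v (i + k)) * gf l' v k := by
  have ha : ∑ s ∈ Finset.Icc (-(l' : ℤ)) (l' : ℤ), Vb v s * gf l' v (i - s)
      = ∑ k ∈ Finset.Icc (i - l') (i + l'), Vb v (i - k) * gf l' v k := by
    refine Eq.trans (Finset.sum_congr rfl (fun s _ => ?_))
      (sum_reflect (fun k => Vb v (i - k) * gf l' v k) (-(l' : ℤ)) (l' : ℤ) i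
        (i - l') (i + l') (by ring) (by ring))
    show Vb v s * gf l' v (i - s) = Vb v (i - (i - s)) * gf l' v (i - s)
    rw [Vb_congr (show (i - (i - s)).natAbs = s.natAbs by omega)]
  have hb : ∑ k ∈ Finset.Icc (i - l') (i + l'), Vb v (i - k) * gf l' v k
      = ∑ k ∈ Finset.Icc (1 - (l' : ℤ)) (i + l'), Vb v (i - k) * gf l' v k := by
    apply sum_congr_support
    intro k hk
    have h1 : Vb v (i - k) ≠ 0 := fun h => hk (by rw [h, zero_mul])
    have := Vb_ne_zero hzero h1
    simp [Finset.mem_Icc]; omega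
  have hc : ∑ k ∈ Finset.Icc (1 - (l' : ℤ)) (i + l'), Vb v (i - k) * gf l' v k
      = (∑ k ∈ Finset.Icc (1 - (l' : ℤ)) 0, Vb v (i - k) * gf l' v k)
        + ∑ k ∈ Finset.Icc (1 : ℤ) (i + (l' : ℤ)), Vb v (i - k) * gf l' v k :=
    Icc_split _ _ 0 _ 1 (by omega) (by omega) (by ring)
  have hd1 : ∀ k ∈ Finset.Icc (1 - (l' : ℤ)) 0, Vb v (i - k) * gf l' v k
      = 2 * Vb v (i - k) - Vb v (i - k) * gf l' v (-k) := by
    intro k hk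
    simp [Finset.mem_Icc] at hk
    rw [gf_neg hzero hsum (by omega : k ≤ 0)]
    ring
  have hd : ∑ k ∈ Finset.Icc (1 - (l' : ℤ)) 0, Vb v (i - k) * gf l' v k
      = 2 * (∑ k ∈ Finset.Icc (1 - (l' : ℤ)) 0, Vb v (i - k))
        - ∑ k ∈ Finset.Icc (1 - (l' : ℤ)) 0, Vb v (i - k) * gf l' v (-k) := by
    rw [Finset.sum_congr rfl hd1, Finset.sum_sub_distrib, Finset.mul_sum]
  have hA1 : ∑ k ∈ Finset.Icc (1 - (l' : ℤ)) 0, Vb v (i - k) = Bt l' v i := by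
    refine Eq.trans (Finset.sum_congr rfl (fun k _ => ?_))
      (Eq.trans (sum_reflect (fun t => Vb v (i + t)) (1 - (l' : ℤ)) 0 0 0 ((l' : ℤ) - 1)
        (by ring) (by ring)) ?_)
    · show Vb v (i - k) = Vb v (i + (0 - k))
      exact Vb_congr (by omega)
    · refine Eq.trans (Finset.sum_congr rfl (fun t _ => ?_))
        (Eq.trans (sum_shift (Vb v) 0 ((l' : ℤ) - 1) (-i) i (i + l' - 1)
          (by ring) (by ring)) ?_)
      · show Vb v (i + t) = Vb v (t - (-i))
        exact Vb_congr (by omega)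
      · unfold Bt
        apply sum_congr_support (Vb v)
        intro k hk
        have := Vb_ne_zero hzero hk
        simp [Finset.mem_Icc]; omega
  have hA2 : ∑ k ∈ Finset.Icc (1 - (l' : ℤ)) 0, Vb v (i - k) * gf l' v (-k)
      = Vb v i + ∑ k ∈ Finset.Icc (1 : ℤ) (l' : ℤ), Vb v (i + k) * gf l' v k := by
    have r1 : ∑ k ∈ Finset.Icc (1 - (l' : ℤ)) 0, Vb v (i - k) * gf l' v (-k)
        = ∑ t ∈ Finset.Icc (0 : ℤ) ((l' : ℤ) - 1), Vb v (i + t) * gf l' v t := by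
      refine Eq.trans (Finset.sum_congr rfl (fun k _ => ?_))
        (sum_reflect (fun t => Vb v (i + t) * gf l' v t) (1 - (l' : ℤ)) 0 0 0 ((l' : ℤ) - 1)
          (by ring) (by ring))
      show Vb v (i - k) * gf l' v (-k) = Vb v (i + (0 - k)) * gf l' v (0 - k)
      rw [Vb_congr (show (i - k).natAbs = (i + (0 - k)).natAbs by omega),
          show (0 : ℤ) - k = -k by ring]
    have r2 : ∑ t ∈ Finset.Icc (0 : ℤ) ((l' : ℤ) - 1), Vb v (i + t) * gf l' v t
        = Vb v (i + 0) * gf l' v 0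
          + ∑ t ∈ Finset.Icc (1 : ℤ) ((l' : ℤ) - 1), Vb v (i + t) * gf l' v t := by
      rw [Icc_split (fun t => Vb v (i + t) * gf l' v t) 0 0 ((l' : ℤ) - 1) 1
          (by omega) (by omega) (by ring),
        Icc_single (fun t => Vb v (i + t) * gf l' v t) 0 0 rfl]
    have r3 : ∑ t ∈ Finset.Icc (1 : ℤ) ((l' : ℤ) - 1), Vb v (i + t) * gf l' v t
        = ∑ t ∈ Finset.Icc (1 : ℤ) (l' : ℤ), Vb v (i + t) * gf l' v t := by
      apply sum_congr_support
      intro k hk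
      have h1 : Vb v (i + k) ≠ 0 := fun h => hk (by rw [h, zero_mul])
      have := Vb_ne_zero hzero h1
      simp [Finset.mem_Icc]; omega
    rw [r1, r2, r3, show i + 0 = i by ring, gf_zero hzero hsum, mul_one]
  have hC : ∑ k ∈ Finset.Icc (1 : ℤ) (i + (l' : ℤ)), Vb v (i - k) * gf l' v k
      = ∑ k ∈ Finset.Icc (1 : ℤ) (l' : ℤ), Vb v (i - k) * gf l' v k := by
    apply sum_congr_support
    intro k hk
    have h1 : gf l' v k ≠ 0 := fun h => hk (by rw [h, mul_zero])
    have := gf_ne_zero h1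
    simp [Finset.mem_Icc]; omega
  rw [ha, hb, hc, hd, hA1, hA2, hC, gf_eq hzero hi]
  rw [Finset.sum_congr rfl (fun k _ => (by ring :
    (Vb v (i - k) - Vb v (i + k)) * gf l' v k
      = Vb v (i - k) * gf l' v k - Vb v (i + k) * gf l' v k)), Finset.sum_sub_distrib]
  ring

end starcore

section star
variable {l' : ℕ} {v w : ℕ → ℝ}

lemma WBsplit (hzero : ∀ k, l' < k → v k = 0)
    (hw : ∀ j : ℕ, w j = ∑' k : ℤ, v k.natAbs * v ((j : ℤ) - k).natAbs)
    (i : ℤ) (hi : 1 ≤ i) :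
    ∑ u ∈ Finset.Icc i (2 * (l' : ℤ)), w u.natAbs
      = w i.natAbs + ∑ u ∈ Finset.Icc (i+1) (2 * (l' : ℤ)), w u.natAbs := by
  rcases le_or_gt i (2 * (l' : ℤ)) with h | h
  · refine Eq.trans (Icc_split (fun u => w u.natAbs) i i _ (i+1) (by omega) h rfl) ?_
    congr 1
    exact Icc_single (fun u => w u.natAbs) i i rfl
  · rw [Finset.Icc_eq_empty (by omega), Finset.Icc_eq_empty (by omega),
        Finset.sum_empty, WZ hzero hw (by omega)]
    ring

lemma STAR (hl' : 0 < l') (hzero : ∀ k, l' < k → v k = 0)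
    (hsum : v 0 + 2 * ∑ j ∈ Finset.Icc 1 l', v j = 1)
    (hw : ∀ j : ℕ, w j = ∑' k : ℤ, v k.natAbs * v ((j : ℤ) - k).natAbs)
    (n : ℕ) (hn4 : 4 * l' + 1 ≤ n) (P : ℤ) (hPdef : P = 2 * (n : ℤ) - 2)
    (i : ℤ) (hi1 : 1 ≤ i) (hi2 : i ≤ (n : ℤ) - 2) :
    w i.natAbs + 2 * ∑ u ∈ Finset.Icc (i+1) (2 * (l' : ℤ)), w u.natAbs
      = gf l' v i + ∑ k ∈ Finset.Icc (1 : ℤ) ((n : ℤ) - 2),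
          (Vb v (i - k) - Vb v (i + k) - Vb v (P - i - k)) * gf l' v k := by
  have hsp := WBsplit hzero hw i hi1
  have hGW := GW hzero hsum hw i hi1
  have hSC := STARcore hl' hzero hsum i hi1
  have hzero3 : ∑ k ∈ Finset.Icc (1 : ℤ) ((n : ℤ) - 2), Vb v (P - i - k) * gf l' v k = 0 := by
    refine Finset.sum_eq_zero (fun k hk => ?_)
    simp [Finset.mem_Icc] at hk
    rcases le_or_gt k (l' : ℤ) with h | h
    · rw [Vb_eq_zero hzero (show (l' : ℤ) < (P - i - k).natAbs by omega), zero_mul]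
    · rw [gf_supp h, mul_zero]
  have htrunc : ∑ k ∈ Finset.Icc (1 : ℤ) ((n : ℤ) - 2), (Vb v (i - k) - Vb v (i + k)) * gf l' v k
      = ∑ k ∈ Finset.Icc (1 : ℤ) (l' : ℤ), (Vb v (i - k) - Vb v (i + k)) * gf l' v k := by
    apply sum_congr_support
    intro k hk
    have h1 : gf l' v k ≠ 0 := fun h => hk (by rw [h, mul_zero])
    have := gf_ne_zero h1
    simp [Finset.mem_Icc]; omega
  have hexp : ∑ k ∈ Finset.Icc (1 : ℤ) ((n : ℤ) - 2),
      (Vb v (i - k) - Vb v (i + k) - Vb v (P - i - k)) * gf l' v k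
      = ∑ k ∈ Finset.Icc (1 : ℤ) ((n : ℤ) - 2),
        ((Vb v (i - k) - Vb v (i + k)) * gf l' v k - Vb v (P - i - k) * gf l' v k) :=
    Finset.sum_congr rfl (fun k _ => by ring)
  rw [hexp, Finset.sum_sub_distrib, hzero3, htrunc, sub_zero]
  linarith [hsp, hGW, hSC]

lemma MCONV' (hzero : ∀ k, l' < k → v k = 0)
    (hw : ∀ j : ℕ, w j = ∑' k : ℤ, v k.natAbs * v ((j : ℤ) - k).natAbs)
    (x y t : ℤ) (S : Finset ℤ) (ht : t.natAbs = (x - y).natAbs)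
    (hS : ∀ k : ℤ, ((x - k).natAbs : ℤ) ≤ (l' : ℤ) → ((k - y).natAbs : ℤ) ≤ (l' : ℤ) → k ∈ S) :
    ∑ k ∈ S, Vb v (x - k) * Vb v (k - y) = w t.natAbs := by
  rw [MCONV hzero hw x y S hS]
  congr 1
  omega

lemma Mlem (hzero : ∀ k, l' < k → v k = 0)
    (hw : ∀ j : ℕ, w j = ∑' k : ℤ, v k.natAbs * v ((j : ℤ) - k).natAbs)
    (n : ℕ) (hn4 : 4 * l' + 1 ≤ n) (hl' : 0 < l')
    (P : ℤ) (hPdef : P = 2 * (n : ℤ) - 2)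
    (i j : ℤ) (hi1 : 1 ≤ i) (hi2 : i ≤ (n : ℤ) - 2) (hj1 : 1 ≤ j) (hj2 : j ≤ (n : ℤ) - 2) :
    ∑ k ∈ Finset.Icc (1 : ℤ) ((n : ℤ) - 2),
        (Vb v (i - k) - Vb v (i + k) - Vb v (P - i - k))
          * (Vb v (k - j) - Vb v (k + j) - Vb v (P - k - j))
      = w (i - j).natAbs - w (i + j).natAbs - w (P - i - j).natAbs := by
  -- reflections
  have e5 : ∑ k ∈ Finset.Icc (1 : ℤ) ((n : ℤ) - 2), Vb v (i + k) * Vb v (k + j)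
      = ∑ k ∈ Finset.Icc (2 - (n : ℤ)) (-1 : ℤ), Vb v (i - k) * Vb v (k - j) := by
    refine Eq.trans (Finset.sum_congr rfl (fun k _ => ?_))
      (sum_reflect (fun k => Vb v (i - k) * Vb v (k - j)) 1 ((n : ℤ) - 2) 0
        (2 - (n : ℤ)) (-1) (by ring) (by ring))
    show Vb v (i + k) * Vb v (k + j) = Vb v (i - (0 - k)) * Vb v ((0 - k) - j)
    rw [Vb_congr (show (i + k).natAbs = (i - (0 - k)).natAbs by omega),
        Vb_congr (show (k + j).natAbs = ((0 - k) - j).natAbs by omega)]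
  have e9 : ∑ k ∈ Finset.Icc (1 : ℤ) ((n : ℤ) - 2), Vb v (P - i - k) * Vb v (P - k - j)
      = ∑ k ∈ Finset.Icc ((n : ℤ)) (P - 1), Vb v (i - k) * Vb v (k - j) := by
    refine Eq.trans (Finset.sum_congr rfl (fun k _ => ?_))
      (sum_reflect (fun k => Vb v (i - k) * Vb v (k - j)) 1 ((n : ℤ) - 2) P
        ((n : ℤ)) (P - 1) (by omega) (by omega))
    show Vb v (P - i - k) * Vb v (P - k - j) = Vb v (i - (P - k)) * Vb v ((P - k) - j)
    rw [Vb_congr (show (P - i - k).natAbs = (i - (P - k)).natAbs by omega),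
        Vb_congr (show (P - k - j).natAbs = ((P - k) - j).natAbs by omega)]
  have e4 : ∑ k ∈ Finset.Icc (1 : ℤ) ((n : ℤ) - 2), Vb v (i + k) * Vb v (k - j)
      = ∑ k ∈ Finset.Icc (2 - (n : ℤ)) (-1 : ℤ), Vb v (i - k) * Vb v (k + j) := by
    refine Eq.trans (Finset.sum_congr rfl (fun k _ => ?_))
      (sum_reflect (fun k => Vb v (i - k) * Vb v (k + j)) 1 ((n : ℤ) - 2) 0
        (2 - (n : ℤ)) (-1) (by ring) (by ring))
    show Vb v (i + k) * Vb v (k - j) = Vb v (i - (0 - k)) * Vb v ((0 - k) + j)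
    rw [Vb_congr (show (i + k).natAbs = (i - (0 - k)).natAbs by omega),
        Vb_congr (show (k - j).natAbs = ((0 - k) + j).natAbs by omega)]
  have e7 : ∑ k ∈ Finset.Icc (1 : ℤ) ((n : ℤ) - 2), Vb v (P - i - k) * Vb v (k - j)
      = ∑ k ∈ Finset.Icc ((n : ℤ)) (P - 1), Vb v (i - k) * Vb v (P - k - j) := by
    refine Eq.trans (Finset.sum_congr rfl (fun k _ => ?_))
      (sum_reflect (fun k => Vb v (i - k) * Vb v (P - k - j)) 1 ((n : ℤ) - 2) P
        ((n : ℤ)) (P - 1) (by omega) (by omega))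
    show Vb v (P - i - k) * Vb v (k - j) = Vb v (i - (P - k)) * Vb v (P - (P - k) - j)
    rw [Vb_congr (show (P - i - k).natAbs = (i - (P - k)).natAbs by omega),
        Vb_congr (show (k - j).natAbs = (P - (P - k) - j).natAbs by omega)]
  -- convolution identities
  have w1 : ∑ k ∈ Finset.Icc (2 - (n : ℤ)) (P - 1), Vb v (i - k) * Vb v (k - j)
      = w (i - j).natAbs := by
    refine MCONV' hzero hw i j _ _ rfl ?_
    intro k h1 h2
    simp [Finset.mem_Icc]; omega
  have w2 : ∑ k ∈ Finset.Icc (2 - (n : ℤ)) ((n : ℤ) - 2), Vb v (i - k) * Vb v (k + j)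
      = w (i + j).natAbs := by
    refine Eq.trans (Finset.sum_congr rfl (fun k _ => ?_))
      (MCONV' hzero hw i (-j) (i + j) _ (by omega) ?_)
    · show Vb v (i - k) * Vb v (k + j) = Vb v (i - k) * Vb v (k - (-j))
      rw [Vb_congr (show (k + j).natAbs = (k - (-j)).natAbs by omega)]
    · intro k h1 h2
      simp [Finset.mem_Icc]; omega
  have w3 : ∑ k ∈ Finset.Icc (1 : ℤ) (P - 1), Vb v (i - k) * Vb v (P - k - j)
      = w (P - i - j).natAbs := by
    refine Eq.trans (Finset.sum_congr rfl (fun k _ => ?_))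
      (MCONV' hzero hw i (P - j) (P - i - j) _ (by omega) ?_)
    · show Vb v (i - k) * Vb v (P - k - j) = Vb v (i - k) * Vb v (k - (P - j))
      rw [Vb_congr (show (P - k - j).natAbs = (k - (P - j)).natAbs by omega)]
    · intro k h1 h2
      simp [Finset.mem_Icc]; omega
  -- splits of w1
  have w1a : ∑ k ∈ Finset.Icc (2 - (n : ℤ)) (P - 1), Vb v (i - k) * Vb v (k - j)
      = (∑ k ∈ Finset.Icc (2 - (n : ℤ)) (-1 : ℤ), Vb v (i - k) * Vb v (k - j))
        + ∑ k ∈ Finset.Icc (0 : ℤ) (P - 1), Vb v (i - k) * Vb v (k - j) :=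
    Icc_split _ _ _ _ _ (by omega) (by omega) (by ring)
  have w1b : ∑ k ∈ Finset.Icc (0 : ℤ) (P - 1), Vb v (i - k) * Vb v (k - j)
      = Vb v (i - (0 : ℤ)) * Vb v ((0 : ℤ) - j)
        + ∑ k ∈ Finset.Icc (1 : ℤ) (P - 1), Vb v (i - k) * Vb v (k - j) := by
    refine Eq.trans (Icc_split _ 0 0 _ 1 (by omega) (by omega) (by ring)) ?_
    congr 1
    exact Icc_single _ 0 0 rfl
  have w1c : ∑ k ∈ Finset.Icc (1 : ℤ) (P - 1), Vb v (i - k) * Vb v (k - j)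
      = (∑ k ∈ Finset.Icc (1 : ℤ) ((n : ℤ) - 2), Vb v (i - k) * Vb v (k - j))
        + ∑ k ∈ Finset.Icc ((n : ℤ) - 1) (P - 1), Vb v (i - k) * Vb v (k - j) :=
    Icc_split _ _ _ _ _ (by omega) (by omega) (by ring)
  have w1d : ∑ k ∈ Finset.Icc ((n : ℤ) - 1) (P - 1), Vb v (i - k) * Vb v (k - j)
      = Vb v (i - ((n : ℤ) - 1)) * Vb v (((n : ℤ) - 1) - j)
        + ∑ k ∈ Finset.Icc ((n : ℤ)) (P - 1), Vb v (i - k) * Vb v (k - j) := by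
    refine Eq.trans (Icc_split _ ((n : ℤ) - 1) ((n : ℤ) - 1) _ ((n : ℤ)) (by omega) (by omega)
      (by ring)) ?_
    congr 1
    exact Icc_single _ _ _ rfl
  have f0 : Vb v (i - (0 : ℤ)) * Vb v ((0 : ℤ) - j) = Vb v i * Vb v j := by
    rw [Vb_congr (show (i - (0 : ℤ)).natAbs = i.natAbs by omega),
        Vb_congr (show ((0 : ℤ) - j).natAbs = j.natAbs by omega)]
  have fn1 : Vb v (i - ((n : ℤ) - 1)) * Vb v (((n : ℤ) - 1) - j)
      = Vb v ((n : ℤ) - 1 - i) * Vb v ((n : ℤ) - 1 - j) := by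
    rw [Vb_congr (show (i - ((n : ℤ) - 1)).natAbs = ((n : ℤ) - 1 - i).natAbs by omega)]
  have hG1 : ∑ k ∈ Finset.Icc (1 : ℤ) ((n : ℤ) - 2),
      (Vb v (i - k) * Vb v (k - j) + Vb v (i + k) * Vb v (k + j)
        + Vb v (P - i - k) * Vb v (P - k - j))
      = w (i - j).natAbs - Vb v i * Vb v j
        - Vb v ((n : ℤ) - 1 - i) * Vb v ((n : ℤ) - 1 - j) := by
    rw [Finset.sum_add_distrib, Finset.sum_add_distrib, e5, e9]
    linarith [w1, w1a, w1b, w1c, w1d, f0, fn1]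
  -- splits of w2
  have w2a : ∑ k ∈ Finset.Icc (2 - (n : ℤ)) ((n : ℤ) - 2), Vb v (i - k) * Vb v (k + j)
      = (∑ k ∈ Finset.Icc (2 - (n : ℤ)) (-1 : ℤ), Vb v (i - k) * Vb v (k + j))
        + ∑ k ∈ Finset.Icc (0 : ℤ) ((n : ℤ) - 2), Vb v (i - k) * Vb v (k + j) :=
    Icc_split _ _ _ _ _ (by omega) (by omega) (by ring)
  have w2b : ∑ k ∈ Finset.Icc (0 : ℤ) ((n : ℤ) - 2), Vb v (i - k) * Vb v (k + j)
      = Vb v (i - (0 : ℤ)) * Vb v ((0 : ℤ) + j)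
        + ∑ k ∈ Finset.Icc (1 : ℤ) ((n : ℤ) - 2), Vb v (i - k) * Vb v (k + j) := by
    refine Eq.trans (Icc_split _ 0 0 _ 1 (by omega) (by omega) (by ring)) ?_
    congr 1
    exact Icc_single _ 0 0 rfl
  have f0' : Vb v (i - (0 : ℤ)) * Vb v ((0 : ℤ) + j) = Vb v i * Vb v j := by
    rw [Vb_congr (show (i - (0 : ℤ)).natAbs = i.natAbs by omega),
        Vb_congr (show ((0 : ℤ) + j).natAbs = j.natAbs by omega)]
  have hG2 : ∑ k ∈ Finset.Icc (1 : ℤ) ((n : ℤ) - 2),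
      (Vb v (i - k) * Vb v (k + j) + Vb v (i + k) * Vb v (k - j))
      = w (i + j).natAbs - Vb v i * Vb v j := by
    rw [Finset.sum_add_distrib, e4]
    linarith [w2, w2a, w2b, f0']
  -- splits of w3
  have w3a : ∑ k ∈ Finset.Icc (1 : ℤ) (P - 1), Vb v (i - k) * Vb v (P - k - j)
      = (∑ k ∈ Finset.Icc (1 : ℤ) ((n : ℤ) - 2), Vb v (i - k) * Vb v (P - k - j))
        + ∑ k ∈ Finset.Icc ((n : ℤ) - 1) (P - 1), Vb v (i - k) * Vb v (P - k - j) :=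
    Icc_split _ _ _ _ _ (by omega) (by omega) (by ring)
  have w3b : ∑ k ∈ Finset.Icc ((n : ℤ) - 1) (P - 1), Vb v (i - k) * Vb v (P - k - j)
      = Vb v (i - ((n : ℤ) - 1)) * Vb v (P - ((n : ℤ) - 1) - j)
        + ∑ k ∈ Finset.Icc ((n : ℤ)) (P - 1), Vb v (i - k) * Vb v (P - k - j) := by
    refine Eq.trans (Icc_split _ ((n : ℤ) - 1) ((n : ℤ) - 1) _ ((n : ℤ)) (by omega) (by omega)
      (by ring)) ?_
    congr 1
    exact Icc_single _ _ _ rfl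
  have fn1' : Vb v (i - ((n : ℤ) - 1)) * Vb v (P - ((n : ℤ) - 1) - j)
      = Vb v ((n : ℤ) - 1 - i) * Vb v ((n : ℤ) - 1 - j) := by
    rw [Vb_congr (show (i - ((n : ℤ) - 1)).natAbs = ((n : ℤ) - 1 - i).natAbs by omega),
        Vb_congr (show (P - ((n : ℤ) - 1) - j).natAbs = ((n : ℤ) - 1 - j).natAbs by omega)]
  have hG3 : ∑ k ∈ Finset.Icc (1 : ℤ) ((n : ℤ) - 2),
      (Vb v (i - k) * Vb v (P - k - j) + Vb v (P - i - k) * Vb v (k - j))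
      = w (P - i - j).natAbs - Vb v ((n : ℤ) - 1 - i) * Vb v ((n : ℤ) - 1 - j) := by
    rw [Finset.sum_add_distrib, e7]
    linarith [w3, w3a, w3b, fn1']
  have hG68 : ∑ k ∈ Finset.Icc (1 : ℤ) ((n : ℤ) - 2),
      (Vb v (i + k) * Vb v (P - k - j) + Vb v (P - i - k) * Vb v (k + j)) = 0 := by
    refine Finset.sum_eq_zero (fun k hk => ?_)
    simp [Finset.mem_Icc] at hk
    have z1 : Vb v (i + k) * Vb v (P - k - j) = 0 := by
      rcases le_or_gt ((i + k).natAbs : ℤ) (l' : ℤ) with h | h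
      · rw [Vb_eq_zero hzero (show (l' : ℤ) < (P - k - j).natAbs by omega), mul_zero]
      · rw [Vb_eq_zero hzero (by omega), zero_mul]
    have z2 : Vb v (P - i - k) * Vb v (k + j) = 0 := by
      rcases le_or_gt ((k + j).natAbs : ℤ) (l' : ℤ) with h | h
      · rw [Vb_eq_zero hzero (t := P - i - k) (show (l' : ℤ) < (P - i - k).natAbs by omega),
            zero_mul]
      · rw [Vb_eq_zero hzero (t := k + j) h, mul_zero]
    rw [z1, z2, add_zero]
  have expand : ∀ k ∈ Finset.Icc (1 : ℤ) ((n : ℤ) - 2),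
      (Vb v (i - k) - Vb v (i + k) - Vb v (P - i - k))
        * (Vb v (k - j) - Vb v (k + j) - Vb v (P - k - j))
      = (Vb v (i - k) * Vb v (k - j) + Vb v (i + k) * Vb v (k + j)
          + Vb v (P - i - k) * Vb v (P - k - j))
        - (Vb v (i - k) * Vb v (k + j) + Vb v (i + k) * Vb v (k - j))
        - (Vb v (i - k) * Vb v (P - k - j) + Vb v (P - i - k) * Vb v (k - j))
        + (Vb v (i + k) * Vb v (P - k - j) + Vb v (P - i - k) * Vb v (k + j)) :=
    fun k _ => by ring
  rw [Finset.sum_congr rfl expand, Finset.sum_add_distrib, Finset.sum_sub_distrib,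
      Finset.sum_sub_distrib, hG1, hG2, hG3, hG68]
  ring

end star

/-- entries of the Anti-Reflective matrix as a function of natural indices -/
noncomputable def arEntry (n l : ℕ) (w : ℕ → ℝ) (a b : ℕ) : ℝ :=
  if a = 0 then (if b = 0 then 2 * ∑ k ∈ Finset.Icc 1 l, w k + w 0 else 0)
  else if a = n - 1 then (if b = n - 1 then 2 * ∑ k ∈ Finset.Icc 1 l, w k + w 0 else 0)
  else if b = 0 then 2 * ∑ k ∈ Finset.Icc (a + 1) l, w k + w a
  else if b = n - 1 then 2 * ∑ k ∈ Finset.Icc (n - a) l, w k + w (n - 1 - a)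
  else w ((a : ℤ) - (b : ℤ)).natAbs - (w (a + b) + w (2 * n - 2 - a - b))

section ge
variable {l' : ℕ} {v : ℕ → ℝ}

lemma GE (hzero : ∀ k, l' < k → v k = 0) (m : ℕ) (hm : 1 ≤ m) :
    2 * (∑ t ∈ Finset.Icc (m+1) l', v t) + v m = gf l' v (m : ℤ) := by
  rw [gf_pos (by omega : (0:ℤ) < (m:ℤ)), Bt_split hzero (by omega : (0:ℤ) ≤ (m:ℤ))]
  have hB : Bt l' v ((m:ℤ)+1) = ∑ t ∈ Finset.Icc (m+1) l', v t := by
    unfold Bt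
    rw [← sum_natInt (Vb v) (m+1) l' ((m:ℤ)+1) (l':ℤ) (by push_cast; ring) rfl]
    exact Finset.sum_congr rfl (fun t _ => by unfold Vb; congr 1 <;> omega)
  have hVm : Vb v (m:ℤ) = v m := by unfold Vb; congr 1 <;> omega
  rw [hB, hVm]
  ring

end ge
end Stmt9Aux

namespace Stmt9Aux

lemma arEntry_eq (n l : ℕ) (w : ℕ → ℝ) (i j : Fin n) :
    antiReflectiveMatrix n l w i j = arEntry n l w i.val j.val := rfl

end Stmt9Aux

open Stmt9Aux in
/-- If `w = v ∗ v` is the autoconvolution of a symmetric filter `v`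
of length `l' ≤ ⌊(n-1)/4⌋` (filters extended symmetrically to ℤ via `k ↦ v |k|`),
so that `w` is a symmetric filter of length `2l'`, then the Anti-Reflective matrix
built from `w` is the square of the one built from `v`: `W^AR(w) = (V^AR)²`. -/
theorem stmt_9 (n l' : ℕ) (hn : 3 ≤ n) (v : ℕ → ℝ)
    (hl' : 0 < l') (hl'n : l' ≤ (n - 1) / 4)
    (hpos : ∀ j, j ≤ l' → 0 < v j)
    (hzero : ∀ k, l' < k → v k = 0)
    (hsum : v 0 + 2 * ∑ j ∈ Finset.Icc 1 l', v j = 1)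
    (w : ℕ → ℝ)
    (hw : ∀ j : ℕ, w j = ∑' k : ℤ, v k.natAbs * v ((j : ℤ) - k).natAbs) :
    antiReflectiveMatrix n (2 * l') w
      = antiReflectiveMatrix n l' v * antiReflectiveMatrix n l' v := by
  have hn4 : 4 * l' + 1 ≤ n := by omega
  have hSv : 2 * ∑ k ∈ Finset.Icc 1 l', v k + v 0 = 1 := by linarith [hsum]
  have hSw : 2 * ∑ k ∈ Finset.Icc 1 (2 * l') , w k + w 0 = 1 := W1 hzero hsum hw
  ext i j
  rw [Matrix.mul_apply, arEntry_eq]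
  simp only [arEntry_eq]
  by_cases hi0 : i.val = 0
  · have hsingle : ∑ k : Fin n, arEntry n l' v i.val k.val * arEntry n l' v k.val j.val
        = arEntry n l' v i.val 0 * arEntry n l' v 0 j.val := by
      refine Finset.sum_eq_single_of_mem (⟨0, by omega⟩ : Fin n) (Finset.mem_univ _) ?_
      intro b _ hb
      have hbv : b.val ≠ 0 := fun h => hb (Fin.ext h)
      unfold arEntry
      rw [if_pos hi0, if_neg hbv, zero_mul]
    rw [hsingle]
    unfold arEntry
    rw [if_pos hi0, if_pos hi0, if_pos rfl, if_pos rfl]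
    by_cases hj0 : j.val = 0
    · rw [if_pos hj0, if_pos hj0, hSv, hSw, mul_one]
    · rw [if_neg hj0, if_neg hj0, mul_zero]
  · by_cases hin : i.val = n - 1
    · have hsingle : ∑ k : Fin n, arEntry n l' v i.val k.val * arEntry n l' v k.val j.val
          = arEntry n l' v i.val (n-1) * arEntry n l' v (n-1) j.val := by
        refine Finset.sum_eq_single_of_mem (⟨n-1, by omega⟩ : Fin n) (Finset.mem_univ _) ?_
        intro b _ hb
        have hbv : b.val ≠ n-1 := fun h => hb (Fin.ext h)
        unfold arEntry
        rw [if_neg hi0, if_pos hin, if_neg hbv, zero_mul]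
      rw [hsingle]
      unfold arEntry
      rw [if_neg hi0, if_neg hi0, if_pos hin, if_pos hin, if_pos rfl,
          if_neg (by omega : ¬ (n-1 = 0)), if_pos rfl]
      by_cases hjn : j.val = n-1
      · rw [if_pos hjn, if_pos hjn, hSv, hSw, mul_one]
      · rw [if_neg hjn, if_neg hjn, mul_zero]
    · -- interior row
      have hi1 : 1 ≤ i.val := by omega
      have hi2 : i.val ≤ n - 2 := by have := i.isLt; omega
      have hfin : ∑ k : Fin n, arEntry n l' v i.val k.val * arEntry n l' v k.val j.val
          = ∑ m ∈ Finset.range n, arEntry n l' v i.val m * arEntry n l' v m j.val :=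
        Fin.sum_univ_eq_sum_range (fun m => arEntry n l' v i.val m * arEntry n l' v m j.val) n
      have hrange : ∑ m ∈ Finset.range n, arEntry n l' v i.val m * arEntry n l' v m j.val
          = arEntry n l' v i.val 0 * arEntry n l' v 0 j.val
            + arEntry n l' v i.val (n-1) * arEntry n l' v (n-1) j.val
            + ∑ m ∈ Finset.Icc 1 (n-2), arEntry n l' v i.val m * arEntry n l' v m j.val := by
        have hset : Finset.range n = insert 0 (insert (n-1) (Finset.Icc 1 (n-2))) := by
          ext x; simp [Finset.mem_insert, Finset.mem_Icc, Finset.mem_range]; omega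
        rw [hset, Finset.sum_insert (by simp [Finset.mem_insert, Finset.mem_Icc]; omega),
            Finset.sum_insert (by simp [Finset.mem_Icc]; omega)]
        ring
      rw [hfin, hrange]
      have hA_i0 : arEntry n l' v i.val 0 = 2 * ∑ k ∈ Finset.Icc (i.val+1) l', v k + v i.val := by
        unfold arEntry; rw [if_neg hi0, if_neg hin, if_pos rfl]
      have hA_in : arEntry n l' v i.val (n-1)
          = 2 * ∑ k ∈ Finset.Icc (n-i.val) l', v k + v (n-1-i.val) := by
        unfold arEntry; rw [if_neg hi0, if_neg hin, if_neg (by omega), if_pos rfl]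
      have hA_0j : arEntry n l' v 0 j.val
          = if j.val = 0 then 2 * ∑ k ∈ Finset.Icc 1 l', v k + v 0 else 0 := by
        unfold arEntry; rw [if_pos rfl]
      have hA_nj : arEntry n l' v (n-1) j.val
          = if j.val = n-1 then 2 * ∑ k ∈ Finset.Icc 1 l', v k + v 0 else 0 := by
        unfold arEntry; rw [if_neg (by omega : ¬ (n-1 = 0)), if_pos rfl]
      by_cases hj0 : j.val = 0
      · -- first column
        have hLHS : arEntry n (2*l') w i.val j.val
            = 2 * ∑ k ∈ Finset.Icc (i.val+1) (2*l'), w k + w i.val := by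
          unfold arEntry; rw [if_neg hi0, if_neg hin, if_pos hj0]
        rw [hLHS, hA_i0, hA_in, hA_0j, hA_nj, if_pos hj0,
            if_neg (show ¬ j.val = n-1 by omega), hSv, mul_one, mul_zero, add_zero]
        have hterm : ∀ m ∈ Finset.Icc 1 (n-2), arEntry n l' v i.val m * arEntry n l' v m j.val
            = (fun k : ℤ => (Vb v ((i.val : ℤ) - k) - Vb v ((i.val : ℤ) + k)
                - Vb v (2*(n:ℤ)-2 - (i.val : ℤ) - k)) * gf l' v k) (m : ℤ) := by
          intro m hm
          simp [Finset.mem_Icc] at hm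
          have hf1 : arEntry n l' v i.val m
              = v ((i.val : ℤ) - (m : ℤ)).natAbs - (v (i.val + m) + v (2*n - 2 - i.val - m)) := by
            unfold arEntry
            rw [if_neg hi0, if_neg hin, if_neg (by omega : ¬ m = 0),
                if_neg (by omega : ¬ m = n-1)]
          have hf2 : arEntry n l' v m j.val
              = 2 * ∑ k ∈ Finset.Icc (m+1) l', v k + v m := by
            unfold arEntry
            rw [if_neg (by omega : ¬ m = 0), if_neg (by omega : ¬ m = n-1), if_pos hj0]
          rw [hf1, hf2, GE hzero m (by omega)]
          show (Vb v ((i.val : ℤ) - (m : ℤ)) - (v (i.val + m) + v (2*n - 2 - i.val - m)))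
              * gf l' v (m : ℤ)
            = (Vb v ((i.val : ℤ) - (m:ℤ)) - Vb v ((i.val : ℤ) + (m:ℤ))
                - Vb v (2*(n:ℤ)-2 - (i.val : ℤ) - (m:ℤ))) * gf l' v (m : ℤ)
          have c2 : v (i.val + m) = Vb v ((i.val : ℤ) + (m:ℤ)) := by unfold Vb; congr 1 <;> omega
          have c3 : v (2*n - 2 - i.val - m) = Vb v (2*(n:ℤ)-2 - (i.val : ℤ) - (m:ℤ)) := by
            unfold Vb; congr 1 <;> omega
          rw [c2, c3]
          ring
        rw [Finset.sum_congr rfl hterm,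
            sum_natInt (fun k : ℤ => (Vb v ((i.val : ℤ) - k) - Vb v ((i.val : ℤ) + k)
              - Vb v (2*(n:ℤ)-2 - (i.val : ℤ) - k)) * gf l' v k) 1 (n-2) 1 ((n:ℤ)-2)
              (by norm_num) (by omega)]
        have hLw : ∑ k ∈ Finset.Icc (i.val+1) (2*l'), w k
            = ∑ u ∈ Finset.Icc ((i.val : ℤ)+1) (2*(l':ℤ)), w u.natAbs := by
          rw [← sum_natInt (fun u => w u.natAbs) (i.val+1) (2*l') ((i.val : ℤ)+1) (2*(l':ℤ))
              (by push_cast; ring) (by push_cast; ring)]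
          exact Finset.sum_congr rfl (fun k _ => by congr 1 <;> omega)
        have hwi : w i.val = w ((i.val : ℤ)).natAbs := by congr 1 <;> omega
        rw [hLw, hwi, GE hzero i.val hi1]
        have hSTAR := STAR hl' hzero hsum hw n hn4 (2*(n:ℤ)-2) rfl ((i.val : ℤ))
          (by omega) (by omega)
        linarith [hSTAR]
      · by_cases hjn : j.val = n-1
        · -- last column
          have hLHS : arEntry n (2*l') w i.val j.val
              = 2 * ∑ k ∈ Finset.Icc (n-i.val) (2*l'), w k + w (n-1-i.val) := by
            unfold arEntry; rw [if_neg hi0, if_neg hin, if_neg hj0, if_pos hjn]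
          rw [hLHS, hA_i0, hA_in, hA_0j, hA_nj, if_neg hj0, if_pos hjn, hSv, mul_one,
              mul_zero, zero_add]
          -- rewrite the (n-1) term via GE
          have hbnd : n - i.val = (n-1-i.val) + 1 := by omega
          have hgin : 2 * ∑ k ∈ Finset.Icc (n-i.val) l', v k + v (n-1-i.val)
              = gf l' v ((n:ℤ) - 1 - (i.val : ℤ)) := by
            rw [hbnd, GE hzero (n-1-i.val) (by omega)]
            congr 1
            omega
          rw [hgin]
          have hterm : ∀ m ∈ Finset.Icc 1 (n-2), arEntry n l' v i.val m * arEntry n l' v m j.val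
              = (fun k : ℤ => (Vb v ((i.val : ℤ) - k) - Vb v ((i.val : ℤ) + k)
                  - Vb v (2*(n:ℤ)-2 - (i.val : ℤ) - k)) * gf l' v ((n:ℤ) - 1 - k)) (m : ℤ) := by
            intro m hm
            simp [Finset.mem_Icc] at hm
            have hf1 : arEntry n l' v i.val m
                = v ((i.val : ℤ) - (m : ℤ)).natAbs - (v (i.val + m) + v (2*n - 2 - i.val - m)) := by
              unfold arEntry
              rw [if_neg hi0, if_neg hin, if_neg (by omega : ¬ m = 0),
                  if_neg (by omega : ¬ m = n-1)]
            have hf2 : arEntry n l' v m j.val = gf l' v ((n:ℤ) - 1 - (m:ℤ)) := by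
              unfold arEntry
              rw [if_neg (by omega : ¬ m = 0), if_neg (by omega : ¬ m = n-1), if_neg hj0,
                  if_pos hjn]
              rw [show n - m = (n-1-m) + 1 by omega, GE hzero (n-1-m) (by omega)]
              congr 1
              omega
            rw [hf1, hf2]
            show (Vb v ((i.val : ℤ) - (m : ℤ)) - (v (i.val + m) + v (2*n - 2 - i.val - m)))
                * gf l' v ((n:ℤ) - 1 - (m:ℤ))
              = (Vb v ((i.val : ℤ) - (m:ℤ)) - Vb v ((i.val : ℤ) + (m:ℤ))
                  - Vb v (2*(n:ℤ)-2 - (i.val : ℤ) - (m:ℤ))) * gf l' v ((n:ℤ) - 1 - (m:ℤ))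
            have c2 : v (i.val + m) = Vb v ((i.val : ℤ) + (m:ℤ)) := by unfold Vb; congr 1 <;> omega
            have c3 : v (2*n - 2 - i.val - m) = Vb v (2*(n:ℤ)-2 - (i.val : ℤ) - (m:ℤ)) := by
              unfold Vb; congr 1 <;> omega
            rw [c2, c3]
            ring
          rw [Finset.sum_congr rfl hterm,
              sum_natInt (fun k : ℤ => (Vb v ((i.val : ℤ) - k) - Vb v ((i.val : ℤ) + k)
                - Vb v (2*(n:ℤ)-2 - (i.val : ℤ) - k)) * gf l' v ((n:ℤ) - 1 - k)) 1 (n-2) 1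
                ((n:ℤ)-2) (by norm_num) (by omega)]
          -- reflect the interior sum
          have hrefl : ∑ k ∈ Finset.Icc (1:ℤ) ((n:ℤ)-2),
              (Vb v ((i.val : ℤ) - k) - Vb v ((i.val : ℤ) + k)
                - Vb v (2*(n:ℤ)-2 - (i.val : ℤ) - k)) * gf l' v ((n:ℤ) - 1 - k)
              = ∑ k ∈ Finset.Icc (1:ℤ) ((n:ℤ)-2),
                (Vb v (((n:ℤ) - 1 - (i.val : ℤ)) - k) - Vb v (((n:ℤ) - 1 - (i.val : ℤ)) + k)
                  - Vb v (2*(n:ℤ)-2 - ((n:ℤ) - 1 - (i.val : ℤ)) - k)) * gf l' v k := by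
            refine Eq.trans (Finset.sum_congr rfl (fun k hk => ?_))
              (sum_reflect (fun k => (Vb v (((n:ℤ) - 1 - (i.val : ℤ)) - k)
                  - Vb v (((n:ℤ) - 1 - (i.val : ℤ)) + k)
                  - Vb v (2*(n:ℤ)-2 - ((n:ℤ) - 1 - (i.val : ℤ)) - k)) * gf l' v k)
                1 ((n:ℤ)-2) ((n:ℤ)-1) 1 ((n:ℤ)-2) (by ring) (by ring))
            show (Vb v ((i.val : ℤ) - k) - Vb v ((i.val : ℤ) + k)
                - Vb v (2*(n:ℤ)-2 - (i.val : ℤ) - k)) * gf l' v ((n:ℤ) - 1 - k)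
              = (Vb v (((n:ℤ) - 1 - (i.val : ℤ)) - ((n:ℤ) - 1 - k))
                  - Vb v (((n:ℤ) - 1 - (i.val : ℤ)) + ((n:ℤ) - 1 - k))
                  - Vb v (2*(n:ℤ)-2 - ((n:ℤ) - 1 - (i.val : ℤ)) - ((n:ℤ) - 1 - k)))
                * gf l' v ((n:ℤ) - 1 - k)
            rw [Vb_congr (show ((i.val : ℤ) - k).natAbs
                  = (((n:ℤ) - 1 - (i.val : ℤ)) - ((n:ℤ) - 1 - k)).natAbs by omega),
                Vb_congr (show ((i.val : ℤ) + k).natAbs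
                  = (2*(n:ℤ)-2 - ((n:ℤ) - 1 - (i.val : ℤ)) - ((n:ℤ) - 1 - k)).natAbs by omega),
                Vb_congr (show (2*(n:ℤ)-2 - (i.val : ℤ) - k).natAbs
                  = (((n:ℤ) - 1 - (i.val : ℤ)) + ((n:ℤ) - 1 - k)).natAbs by omega)]
            ring
          rw [hrefl]
          have hLw : ∑ k ∈ Finset.Icc (n-i.val) (2*l'), w k
              = ∑ u ∈ Finset.Icc (((n:ℤ) - 1 - (i.val : ℤ))+1) (2*(l':ℤ)), w u.natAbs := by
            rw [← sum_natInt (fun u => w u.natAbs) (n-i.val) (2*l')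
                (((n:ℤ) - 1 - (i.val : ℤ))+1) (2*(l':ℤ)) (by omega) (by push_cast; ring)]
            exact Finset.sum_congr rfl (fun k _ => by congr 1 <;> omega)
          have hwi : w (n-1-i.val) = w ((n:ℤ) - 1 - (i.val : ℤ)).natAbs := by congr 1 <;> omega
          rw [hLw, hwi]
          have hSTAR := STAR hl' hzero hsum hw n hn4 (2*(n:ℤ)-2) rfl ((n:ℤ) - 1 - (i.val : ℤ))
            (by omega) (by omega)
          linarith [hSTAR]
        · -- interior column
          have hj1 : 1 ≤ j.val := by omega
          have hj2 : j.val ≤ n - 2 := by have := j.isLt; omega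
          have hLHS : arEntry n (2*l') w i.val j.val
              = w ((i.val : ℤ) - (j.val : ℤ)).natAbs
                - (w (i.val + j.val) + w (2*n - 2 - i.val - j.val)) := by
            unfold arEntry; rw [if_neg hi0, if_neg hin, if_neg hj0, if_neg hjn]
          rw [hLHS, hA_i0, hA_in, hA_0j, hA_nj, if_neg hj0,
              if_neg hjn, mul_zero, mul_zero, zero_add, zero_add]
          have hterm : ∀ m ∈ Finset.Icc 1 (n-2), arEntry n l' v i.val m * arEntry n l' v m j.val
              = (fun k : ℤ => (Vb v ((i.val : ℤ) - k) - Vb v ((i.val : ℤ) + k)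
                  - Vb v (2*(n:ℤ)-2 - (i.val : ℤ) - k))
                * (Vb v (k - (j.val : ℤ)) - Vb v (k + (j.val : ℤ))
                  - Vb v (2*(n:ℤ)-2 - k - (j.val : ℤ)))) (m : ℤ) := by
            intro m hm
            simp [Finset.mem_Icc] at hm
            have hf1 : arEntry n l' v i.val m
                = v ((i.val : ℤ) - (m : ℤ)).natAbs - (v (i.val + m) + v (2*n - 2 - i.val - m)) := by
              unfold arEntry
              rw [if_neg hi0, if_neg hin, if_neg (by omega : ¬ m = 0),
                  if_neg (by omega : ¬ m = n-1)]
            have hf2 : arEntry n l' v m j.val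
                = v ((m : ℤ) - (j.val : ℤ)).natAbs - (v (m + j.val) + v (2*n - 2 - m - j.val)) := by
              unfold arEntry
              rw [if_neg (by omega : ¬ m = 0), if_neg (by omega : ¬ m = n-1), if_neg hj0,
                  if_neg hjn]
            rw [hf1, hf2]
            show (Vb v ((i.val : ℤ) - (m : ℤ)) - (v (i.val + m) + v (2*n - 2 - i.val - m)))
                * (Vb v ((m : ℤ) - (j.val : ℤ)) - (v (m + j.val) + v (2*n - 2 - m - j.val)))
              = (Vb v ((i.val : ℤ) - (m:ℤ)) - Vb v ((i.val : ℤ) + (m:ℤ))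
                  - Vb v (2*(n:ℤ)-2 - (i.val : ℤ) - (m:ℤ)))
                * (Vb v ((m:ℤ) - (j.val : ℤ)) - Vb v ((m:ℤ) + (j.val : ℤ))
                  - Vb v (2*(n:ℤ)-2 - (m:ℤ) - (j.val : ℤ)))
            have c2 : v (i.val + m) = Vb v ((i.val : ℤ) + (m:ℤ)) := by unfold Vb; congr 1 <;> omega
            have c3 : v (2*n - 2 - i.val - m) = Vb v (2*(n:ℤ)-2 - (i.val : ℤ) - (m:ℤ)) := by
              unfold Vb; congr 1 <;> omega
            have c4 : v (m + j.val) = Vb v ((m:ℤ) + (j.val : ℤ)) := by unfold Vb; congr 1 <;> omega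
            have c5 : v (2*n - 2 - m - j.val)
                = Vb v (2*(n:ℤ)-2 - (m:ℤ) - (j.val : ℤ)) := by
              unfold Vb; congr 1 <;> omega
            rw [c2, c3, c4, c5]
            ring
          rw [Finset.sum_congr rfl hterm,
              sum_natInt (fun k : ℤ => (Vb v ((i.val : ℤ) - k) - Vb v ((i.val : ℤ) + k)
                  - Vb v (2*(n:ℤ)-2 - (i.val : ℤ) - k))
                * (Vb v (k - (j.val : ℤ)) - Vb v (k + (j.val : ℤ))
                  - Vb v (2*(n:ℤ)-2 - k - (j.val : ℤ)))) 1 (n-2) 1 ((n:ℤ)-2)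
                (by norm_num) (by omega)]
          have hM := Mlem hzero hw n hn4 hl' (2*(n:ℤ)-2) rfl ((i.val : ℤ)) ((j.val : ℤ))
            (by omega) (by omega) (by omega) (by omega)
          have cw1 : w (i.val + j.val) = w ((i.val : ℤ) + (j.val : ℤ)).natAbs := by
            congr 1 <;> omega
          have cw2 : w (2*n - 2 - i.val - j.val)
              = w (2*(n:ℤ)-2 - (i.val : ℤ) - (j.val : ℤ)).natAbs := by
            congr 1 <;> omega
          rw [cw1, cw2]
          linarith [hM]
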